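/- If H is a q-sparse graph on n vertices, then H has fewer than n·log₂ n edges; and if in addition q ≤ n^{-c} for some c > 0, then H has fewer than n/c edges. -/

import Mathlib

open SimpleGraph

/-- Number of (unlabeled) copies of `J` in `G`: subgraphs of `G` isomorphic to `J`. -/
noncomputable def copyCount {α β : Type*} (J : SimpleGraph α) (G : SimpleGraph β) : ℕ :=
  Set.ncard {A : G.Subgraph | Nonempty (A.coe ≃g J)}

/-- Expected number of copies of `J` in the Erdős–Rényi random graph `G(n,q)`. -/
noncomputable def expCopies {α : Type*} (n : ℕ) (J : SimpleGraph α) (q : ℝ) : ℝ :=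
  (copyCount J (⊤ : SimpleGraph (Fin n)) : ℝ) * q ^ (Set.ncard J.edgeSet)

/-- `H` is `q`-sparse: every subgraph `I ⊆ H` has `E_q X_I ≥ 1`. -/
def qSparse {n : ℕ} (q : ℝ) (H : SimpleGraph (Fin n)) : Prop :=
  ∀ I : H.Subgraph, 1 ≤ expCopies n I.coe q
lemma subgraph_verts_eq_range {β α : Type*} {G : SimpleGraph β} {J : SimpleGraph α}
    (A : G.Subgraph) (e : A.coe ≃g J) :
    A.verts = Set.range (fun v => ((e.symm v : A.verts) : β)) := by
  ext x
  constructor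
  · intro hx
    exact ⟨e ⟨x, hx⟩, by simp⟩
  · rintro ⟨v, rfl⟩
    exact (e.symm v).2

lemma subgraph_adj_iff {β α : Type*} {G : SimpleGraph β} {J : SimpleGraph α}
    (A : G.Subgraph) (e : A.coe ≃g J) (x y : β) :
    A.Adj x y ↔ ∃ u v, J.Adj u v ∧ ((e.symm u : A.verts) : β) = x ∧
      ((e.symm v : A.verts) : β) = y := by
  constructor
  · intro h
    refine ⟨e ⟨x, h.fst_mem⟩, e ⟨y, h.snd_mem⟩, ?_, by simp, by simp⟩
    exact e.map_adj_iff.mpr h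
  · rintro ⟨u, v, huv, rfl, rfl⟩
    exact e.symm.map_adj_iff.mpr huv

lemma subgraph_eq_of_maps_eq {β α : Type*} {G : SimpleGraph β} {J : SimpleGraph α}
    {A B : G.Subgraph} (eA : A.coe ≃g J) (eB : B.coe ≃g J)
    (h : ∀ v, ((eA.symm v : A.verts) : β) = ((eB.symm v : B.verts) : β)) : A = B := by
  ext x y
  · rw [Set.ext_iff.mp (subgraph_verts_eq_range A eA) x,
      Set.ext_iff.mp (subgraph_verts_eq_range B eB) x]
    simp only [Set.mem_range, h]
  · rw [subgraph_adj_iff A eA, subgraph_adj_iff B eB]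
    simp only [h]

def placement {β α : Type*} {G : SimpleGraph β} {J : SimpleGraph α}
    (A : G.Subgraph) (e : A.coe ≃g J) : α ↪ β :=
  ⟨fun v => ((e.symm v : A.verts) : β),
    fun u v huv => by simpa using congrArg e (Subtype.ext huv)⟩

lemma copyCount_le_descFactorial {α : Type*} [Fintype α] (J : SimpleGraph α) (n : ℕ) :
    _root_.copyCount J (⊤ : SimpleGraph (Fin n)) ≤ n.descFactorial (Fintype.card α) := by
  classical
  rw [_root_.copyCount, ← Nat.card_coe_set_eq]
  have hcard : Nat.card (α ↪ Fin n) = n.descFactorial (Fintype.card α) := by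
    rw [Nat.card_eq_fintype_card, Fintype.card_embedding_eq, Fintype.card_fin]
  rw [← hcard]
  have hF : Function.Injective
      (fun A : {A : (⊤ : SimpleGraph (Fin n)).Subgraph // Nonempty (A.coe ≃g J)} =>
        placement A.1 (Classical.choice A.2)) := by
    intro A B h
    apply Subtype.ext
    exact subgraph_eq_of_maps_eq (Classical.choice A.2) (Classical.choice B.2)
      (fun v => congrFun (congrArg (fun (f : α ↪ Fin n) => (f : α → Fin n)) h) v)
  exact Nat.card_le_card_of_injective _ hF

/-- If `H` is `q`-sparse on `n` vertices (with `n` sufficiently large and `q ≤ 1/L` for a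
sufficiently large constant `L`), then `H` has fewer than `n log₂ n` edges; and if moreover
`q ≤ n^{-c}` for some `c > 0`, then `H` has fewer than `n/c` edges. -/
theorem edgeCount_of_qSparse :
    ∃ (N : ℕ) (L : ℝ), 0 < L ∧
      ∀ (n : ℕ) (q : ℝ) (H : SimpleGraph (Fin n)), N ≤ n → 0 ≤ q → q ≤ 1 / L →
        qSparse q H →
        (Set.ncard H.edgeSet : ℝ) < n * Real.logb 2 n ∧
        (∀ c : ℝ, 0 < c → q ≤ (n : ℝ) ^ (-c) → (Set.ncard H.edgeSet : ℝ) < n / c) := by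
  refine ⟨2, 4, by norm_num, ?_⟩
  intro n q H hn hq0 hq4 hs
  have hn1 : (1:ℝ) < n := by exact_mod_cast lt_of_lt_of_le one_lt_two hn
  have hnpos : (0:ℝ) < n := lt_trans one_pos hn1
  have hlogn : 0 < Real.log n := Real.log_pos hn1
  have hlog2 : 0 < Real.log 2 := Real.log_pos one_lt_two
  set m := Set.ncard H.edgeSet with hmdef
  have hI := hs ⊤
  -- edge count of the top subgraph equals m
  have hedge : Set.ncard (⊤ : H.Subgraph).coe.edgeSet = m := by
    rw [hmdef, ← Nat.card_coe_set_eq, ← Nat.card_coe_set_eq]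
    exact Nat.card_congr (Iso.mapEdgeSet (Subgraph.topIso))
  haveI : Fintype ↥(⊤ : H.Subgraph).verts := Fintype.ofFinite _
  have hvcard : Fintype.card ↥(⊤ : H.Subgraph).verts = n := by
    rw [← Nat.card_eq_fintype_card]
    simp only [Subgraph.verts_top, Nat.card_eq_fintype_card]
    exact (Fintype.card_congr (Equiv.Set.univ (Fin n))).trans (Fintype.card_fin n)
  have hC : _root_.copyCount (⊤ : H.Subgraph).coe (⊤ : SimpleGraph (Fin n)) < n ^ n := by
    calc _root_.copyCount (⊤ : H.Subgraph).coe (⊤ : SimpleGraph (Fin n))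
        ≤ n.descFactorial (Fintype.card ↥(⊤ : H.Subgraph).verts) :=
          copyCount_le_descFactorial _ n
      _ = n.descFactorial n := by rw [hvcard]
      _ < n ^ n := Nat.descFactorial_lt_pow (by omega) hn
  rw [expCopies, hedge] at hI
  set C := _root_.copyCount (⊤ : H.Subgraph).coe (⊤ : SimpleGraph (Fin n)) with hCdef
  have hC' : (C : ℝ) < (n : ℝ) ^ n := by exact_mod_cast hC
  rcases Nat.eq_zero_or_pos m with hm0 | hm1
  · constructor
    · rw [hm0]
      push_cast
      exact mul_pos hnpos (Real.logb_pos one_lt_two hn1)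
    · intro c hc _
      rw [hm0]
      push_cast
      positivity
  · -- q must be positive
    have hqpos : 0 < q := by
      rcases hq0.lt_or_eq with h | h
      · exact h
      · exfalso
        rw [← h, zero_pow (Nat.pos_iff_ne_zero.mp hm1), mul_zero] at hI
        linarith
    have hqm : 1 / (n : ℝ) ^ n < q ^ m := by
      rw [div_lt_iff₀ (by positivity)]
      nlinarith [pow_pos hqpos m, mul_lt_mul_of_pos_right hC' (pow_pos hqpos m)]
    constructor
    · -- part 1 : m < n logb 2 n
      have h4 : (4:ℝ) ^ m < (n : ℝ) ^ n := by
        have hle : q ^ m ≤ (1/4 : ℝ) ^ m := pow_le_pow_left₀ hq0 hq4 m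
        have : 1 / (n : ℝ) ^ n < 1 / (4:ℝ) ^ m := by
          calc 1 / (n : ℝ) ^ n < q ^ m := hqm
            _ ≤ (1/4 : ℝ) ^ m := hle
            _ = 1 / (4:ℝ) ^ m := by rw [div_pow]; norm_num
        rw [div_lt_div_iff₀ (by positivity) (by positivity)] at this
        linarith
      have hlog := Real.log_lt_log (by positivity) h4
      rw [Real.log_pow, Real.log_pow] at hlog
      have hlog4 : Real.log 4 = 2 * Real.log 2 := by
        rw [show (4:ℝ) = 2 ^ 2 by norm_num, Real.log_pow]
        push_cast; ring
      rw [hlog4] at hlog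
      rw [Real.logb, mul_div_assoc', lt_div_iff₀ hlog2]
      nlinarith [Nat.cast_nonneg (α := ℝ) m]
    · -- part 2 : m < n / c
      intro c hc hqc
      have hle : q ^ m ≤ ((n : ℝ) ^ (-c)) ^ m := pow_le_pow_left₀ hq0 hqc m
      have hrw : ((n : ℝ) ^ (-c)) ^ m = (n : ℝ) ^ (-(c * m)) := by
        rw [← Real.rpow_natCast ((n : ℝ) ^ (-c)) m, ← Real.rpow_mul (le_of_lt hnpos)]
        ring_nf
      have hrw2 : 1 / (n : ℝ) ^ n = (n : ℝ) ^ (-(n : ℝ)) := by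
        rw [Real.rpow_neg (le_of_lt hnpos), Real.rpow_natCast, one_div]
      have hkey : (n : ℝ) ^ (-(n : ℝ)) < (n : ℝ) ^ (-(c * m)) := by
        rw [← hrw2, ← hrw]
        exact lt_of_lt_of_le hqm hle
      have := (Real.rpow_lt_rpow_left_iff hn1).mp hkey
      have hcm : c * m < n := by linarith
      rw [lt_div_iff₀ hc]
      linarith [mul_comm c (m : ℝ)]
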